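/- With $a_i(x)=\sum_{k\ne i}\alpha_{ik}/(x_i-x_k)$ on $\Delta_d$, $\alpha$ symmetric with nonnegative entries, for every $x\in\Delta_d$ and $y\in\mathbb{R}^d$ one has $\langle y, a'(x) y\rangle = -\sum_{k>l} \frac{\alpha_{kl}}{(x_k-x_l)^2}(y_k-y_l)^2 \le 0$; i.e., the Jacobian $a'(x)$ is negative semi-definite. -/

import Mathlib

open Finset

lemma fderiv_a (d : ℕ) (α : Fin d → Fin d → ℝ) (x : Fin d → ℝ)
    (hxne : ∀ i k : Fin d, i ≠ k → x i - x k ≠ 0) (i : Fin d) (y : Fin d → ℝ) :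
    fderiv ℝ (fun v : Fin d → ℝ => ∑ k ∈ univ.erase i, α i k / (v i - v k)) x y
      = ∑ k ∈ univ.erase i, α i k * ((y i - y k) * (-((x i - x k) ^ 2)⁻¹)) := by
  have H : HasFDerivAt (fun v : Fin d → ℝ => ∑ k ∈ univ.erase i, α i k / (v i - v k))
      (∑ k ∈ univ.erase i, α i k •
        ((ContinuousLinearMap.smulRight (1 : ℝ →L[ℝ] ℝ) (-((x i - x k) ^ 2)⁻¹)).comp
          (ContinuousLinearMap.proj i - ContinuousLinearMap.proj (R := ℝ) (φ := fun _ : Fin d => ℝ) k))) x := by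
    apply HasFDerivAt.fun_sum
    intro k hk
    have hk' : i ≠ k := fun h => (mem_erase.mp hk).1 h.symm
    have hne : x i - x k ≠ 0 := hxne i k hk'
    have hL : HasFDerivAt (fun v : Fin d → ℝ => v i - v k)
        ((ContinuousLinearMap.proj i - ContinuousLinearMap.proj (R := ℝ) (φ := fun _ : Fin d => ℝ) k) :
          (Fin d → ℝ) →L[ℝ] ℝ) x :=
      (ContinuousLinearMap.proj i - ContinuousLinearMap.proj (R := ℝ) (φ := fun _ : Fin d => ℝ) k).hasFDerivAt
    have hinv : HasFDerivAt (fun t : ℝ => t⁻¹)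
        (ContinuousLinearMap.smulRight (1 : ℝ →L[ℝ] ℝ) (-((x i - x k) ^ 2)⁻¹)) (x i - x k) :=
      hasFDerivAt_inv hne
    have := (hinv.comp x hL).const_mul (α i k)
    simp only [div_eq_mul_inv]
    convert this using 2 <;> rfl
  rw [H.fderiv, ContinuousLinearMap.sum_apply]
  refine Finset.sum_congr rfl fun k hk => ?_
  simp only [ContinuousLinearMap.smul_apply, ContinuousLinearMap.comp_apply,
    ContinuousLinearMap.sub_apply, ContinuousLinearMap.proj_apply,
    ContinuousLinearMap.smulRight_apply, ContinuousLinearMap.one_apply, smul_eq_mul]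

lemma sum_swap_tri (d : ℕ) (f : Fin d → Fin d → ℝ) :
    ∑ i, ∑ k ∈ Ioi i, f i k = ∑ k, ∑ i ∈ Iio k, f i k := by
  rw [Finset.sum_sigma', Finset.sum_sigma']
  apply Finset.sum_nbij' (fun p => ⟨p.2, p.1⟩) (fun p => ⟨p.2, p.1⟩) <;> simp

lemma erase_split_sum (d : ℕ) (f : Fin d → Fin d → ℝ) (i : Fin d) :
    ∑ k ∈ univ.erase i, f i k = ∑ k ∈ Iio i, f i k + ∑ k ∈ Ioi i, f i k := by
  rw [← Finset.sum_union]
  · apply Finset.sum_congr _ fun _ _ => rfl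
    ext k
    simp only [mem_erase, mem_univ, and_true, mem_union, mem_Iio, mem_Ioi]
    exact ⟨fun h => h.lt_or_gt, fun h => h.elim ne_of_lt ne_of_gt⟩
  · simp only [Finset.disjoint_left, mem_Iio, mem_Ioi]
    exact fun a h1 h2 => absurd (h1.trans h2) (lt_irrefl _)

theorem jacobian_negative_semidefinite (d : ℕ) (α : Fin d → Fin d → ℝ)
    (hsymm : ∀ i j, α i j = α j i) (hnonneg : ∀ i j, 0 ≤ α i j)
    (x : Fin d → ℝ) (hx : ∀ i j : Fin d, i < j → x i < x j)
    (a : Fin d → (Fin d → ℝ) → ℝ)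
    (ha : ∀ i y, a i y = ∑ k ∈ univ.erase i, α i k / (y i - y k))
    (y : Fin d → ℝ) :
    (∑ i, y i * fderiv ℝ (a i) x y
        = -∑ k, ∑ l ∈ Iio k, α k l / (x k - x l) ^ 2 * (y k - y l) ^ 2) ∧
    ∑ i, y i * fderiv ℝ (a i) x y ≤ 0 := by
  have hxne : ∀ i k : Fin d, i ≠ k → x i - x k ≠ 0 := by
    intro i k h
    rcases h.lt_or_gt with h | h
    · exact sub_ne_zero.mpr (ne_of_lt (hx i k h))
    · exact sub_ne_zero.mpr (ne_of_gt (hx k i h))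
  have hder : ∀ i, fderiv ℝ (a i) x y
      = ∑ k ∈ univ.erase i, α i k * ((y i - y k) * (-((x i - x k) ^ 2)⁻¹)) := by
    intro i
    have : a i = fun v : Fin d → ℝ => ∑ k ∈ univ.erase i, α i k / (v i - v k) :=
      funext (ha i)
    rw [this]
    exact fderiv_a d α x hxne i y
  set g : Fin d → Fin d → ℝ :=
    fun i k => y i * (α i k * ((y i - y k) * (-((x i - x k) ^ 2)⁻¹))) with hg
  have key : ∑ i, y i * fderiv ℝ (a i) x y
      = -∑ k, ∑ l ∈ Iio k, α k l / (x k - x l) ^ 2 * (y k - y l) ^ 2 := by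
    calc ∑ i, y i * fderiv ℝ (a i) x y
        = ∑ i, ∑ k ∈ univ.erase i, g i k := by
          refine Finset.sum_congr rfl fun i _ => ?_
          rw [hder i, Finset.mul_sum]
      _ = ∑ i, ∑ k ∈ Iio i, g i k + ∑ i, ∑ k ∈ Ioi i, g i k := by
          rw [← Finset.sum_add_distrib]
          exact Finset.sum_congr rfl fun i _ => erase_split_sum d g i
      _ = ∑ i, ∑ k ∈ Iio i, g i k + ∑ i, ∑ k ∈ Iio i, g k i := by
          rw [sum_swap_tri d g]
      _ = ∑ i, ∑ k ∈ Iio i, (g i k + g k i) := by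
          rw [← Finset.sum_add_distrib]
          exact Finset.sum_congr rfl fun i _ => (Finset.sum_add_distrib).symm
      _ = ∑ i, ∑ k ∈ Iio i, -(α i k / (x i - x k) ^ 2 * (y i - y k) ^ 2) := by
          refine Finset.sum_congr rfl fun i _ => Finset.sum_congr rfl fun k _ => ?_
          have h2 : (x k - x i) ^ 2 = (x i - x k) ^ 2 := by ring
          rw [hg]
          simp only []
          rw [hsymm k i, h2]
          ring
      _ = -∑ k, ∑ l ∈ Iio k, α k l / (x k - x l) ^ 2 * (y k - y l) ^ 2 := by
          simp [Finset.sum_neg_distrib]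
  refine ⟨key, ?_⟩
  rw [key, neg_nonpos]
  refine Finset.sum_nonneg fun k _ => Finset.sum_nonneg fun l _ => ?_
  exact mul_nonneg (div_nonneg (hnonneg k l) (sq_nonneg _)) (sq_nonneg _)
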